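/- arXiv:1006.4937 — 11 statements merged into one kernel-verified Lean document; each statement's English description precedes it below -/
import Mathlib

section
/- The distributed greedy algorithm terminates in finite time: there exists a round t with t ≤ |L| such that O_{t+1} ∪ H_{t+1} = ∅, i.e., after at most |L| rounds no link is OPEN or CHECK. -/
open Classical

/-- Link distance `d(l_u,l_v)`: minimum graph distance between endpoints of the two links. -/
noncomputable def linkDist {V : Type*} (G : SimpleGraph V) (lu lv : V × V) : ℕ :=
  min (min (G.dist lu.1 lv.1) (G.dist lu.1 lv.2))
      (min (G.dist lu.2 lv.1) (G.dist lu.2 lv.2))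

/-- A wireless network: a connected simple graph `G` on the node set `V`, a finite set `L`
of directed links between adjacent nodes, an interference parameter `K ≥ 1`, and
pairwise distinct link prices `lam`. -/
structure Net (V : Type*) where
  G : SimpleGraph V
  conn : G.Connected
  L : Set (V × V)
  Lfin : L.Finite
  adj : ∀ l ∈ L, G.Adj l.1 l.2
  K : ℕ
  hK : 1 ≤ K
  lam : V × V → ℝ
  distinct : ∀ l ∈ L, ∀ l' ∈ L, l ≠ l' → lam l ≠ lam l'

/-- `W` is a `K`-valid matching: distinct links of `W` are at link distance `≥ K`. -/
def KValid {V : Type*} (N : Net V) (W : Set (V × V)) : Prop :=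
  ∀ l ∈ W, ∀ l' ∈ W, l ≠ l' → N.K ≤ linkDist N.G l l'

/-- State of the distributed algorithm: the OPEN, CHECK, MARKED and CLOSED links. -/
structure St (V : Type*) where
  O : Set (V × V)
  H : Set (V × V)
  M : Set (V × V)
  C : Set (V × V)

/-- The OPEN attached links of node `n` (OPEN links whose source is `n`). -/
def openAt {V : Type*} (s : St V) (n : V) : Set (V × V) :=
  {l ∈ s.O | l.1 = n}

/-- `a` selects, at every node `n` having an OPEN attached link, the highest-priced
OPEN attached link `a n` of `n`. -/
def IsSelector {V : Type*} (N : Net V) (s : St V) (a : V → V × V) : Prop :=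
  ∀ n, (openAt s n).Nonempty →
    a n ∈ openAt s n ∧ ∀ l ∈ openAt s n, N.lam l ≤ N.lam (a n)

/-- `R(n)`: the highest-priced OPEN attached links `a n'` of the other nodes `n'` within
`K+1` hops of `n` that have an OPEN attached link. -/
def Rset {V : Type*} (N : Net V) (s : St V) (a : V → V × V) (n : V) : Set (V × V) :=
  {l' | ∃ n', n' ≠ n ∧ N.G.dist n n' ≤ N.K + 1 ∧ (openAt s n').Nonempty ∧ l' = a n'}

/-- Node `n` marks its highest-priced OPEN attached link `a n`: `n` has an OPEN attached
link, and either `R(n) = ∅` or `a n` beats every received price (this disjunction is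
expressed by the universally quantified inequality). -/
def MarkCond {V : Type*} (N : Net V) (s : St V) (a : V → V × V) (n : V) : Prop :=
  (openAt s n).Nonempty ∧ ∀ l' ∈ Rset N s a n, N.lam l' < N.lam (a n)

/-- One round of the distributed greedy algorithm, transforming state `s` into `s'`.
Phase 1: each node `n` with an OPEN attached link either marks `a n` and closes its other
OPEN attached links (when `MarkCond` holds), or moves to CHECK each OPEN attached link
that is interfered with by a strictly higher-priced received link, the rest staying OPEN.
Phase 2: the marked links are added to the MARKED set; every CHECK link interfering with
some MARKED link is closed; then at each node the highest-priced attached link still in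
CHECK (if any) becomes OPEN again. -/
def Step {V : Type*} (N : Net V) (s s' : St V) : Prop :=
  ∃ a : V → V × V, IsSelector N s a ∧
    (let newMarked : Set (V × V) := {l | ∃ n, MarkCond N s a n ∧ l = a n}
     let closed1 : Set (V × V) := {l ∈ s.O | MarkCond N s a l.1 ∧ l ≠ a l.1}
     let newCheck : Set (V × V) :=
       {l ∈ s.O | ¬ MarkCond N s a l.1 ∧
         ∃ l' ∈ Rset N s a l.1, N.lam l < N.lam l' ∧ linkDist N.G l l' < N.K}
     let M' : Set (V × V) := s.M ∪ newMarked
     let pool : Set (V × V) := s.H ∪ newCheck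
     let closed2 : Set (V × V) := {l ∈ pool | ∃ j ∈ M', linkDist N.G l j < N.K}
     let rem : Set (V × V) := pool \ closed2
     let reopened : Set (V × V) := {l ∈ rem | ∀ l' ∈ rem, l'.1 = l.1 → N.lam l' ≤ N.lam l}
     s'.O = (s.O \ (newMarked ∪ closed1 ∪ newCheck)) ∪ reopened ∧
     s'.H = rem \ reopened ∧
     s'.M = M' ∧
     s'.C = s.C ∪ closed1 ∪ closed2)

/-- A trajectory of the distributed greedy algorithm, rounds indexed from `1`:
initially every link of `L` is OPEN, and each round `m ≥ 1` performs one `Step`. -/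
def IsTrajectory {V : Type*} (N : Net V) (O H M C : ℕ → Set (V × V)) : Prop :=
  O 1 = N.L ∧ H 1 = ∅ ∧ M 1 = ∅ ∧ C 1 = ∅ ∧
    ∀ m, 1 ≤ m → Step N ⟨O m, H m, M m, C m⟩ ⟨O (m+1), H (m+1), M (m+1), C (m+1)⟩

/-- Process a list of links in order, starting from `W`, adding a link whenever the
result is still a `K`-valid matching.  Applied to the listing of `L` in strictly
decreasing order of price, this computes the centralized greedy schedule `L_C`. -/
noncomputable def greedyList {V : Type*} (N : Net V) :
    List (V × V) → Set (V × V) → Set (V × V)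
  | [], W => W
  | l :: ls, W => greedyList N ls (if KValid N (insert l W) then insert l W else W)

lemma step_facts {V : Type*} (N : Net V) (s s' : St V) (h : Step N s s')
    (hOL : s.O ⊆ N.L) (hHL : s.H ⊆ N.L) (hLfin : N.L.Finite)
    (hdisj : ∀ l ∈ s.O, l ∉ s.H) :
    (s'.O ∪ s'.H ⊆ s.O ∪ s.H) ∧
    (∀ l ∈ s'.O, l ∉ s'.H) ∧
    (s'.H.Nonempty → s'.O.Nonempty) ∧
    (s.O.Nonempty → ∃ b ∈ s.O ∪ s.H, b ∉ s'.O ∪ s'.H) := by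
  obtain ⟨a, hsel, hO, hH, hM, hC⟩ := h
  set nm : Set (V × V) := {l | ∃ n, MarkCond N s a n ∧ l = a n} with hnm
  set c1 : Set (V × V) := {l ∈ s.O | MarkCond N s a l.1 ∧ l ≠ a l.1} with hc1
  set nc : Set (V × V) :=
      {l ∈ s.O | ¬ MarkCond N s a l.1 ∧
        ∃ l' ∈ Rset N s a l.1, N.lam l < N.lam l' ∧ linkDist N.G l l' < N.K} with hnc
  set pool : Set (V × V) := s.H ∪ nc with hpool
  set c2 : Set (V × V) := {l ∈ pool | ∃ j ∈ s.M ∪ nm, linkDist N.G l j < N.K} with hc2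
  set rem : Set (V × V) := pool \ c2 with hrem
  set reop : Set (V × V) := {l ∈ rem | ∀ l' ∈ rem, l'.1 = l.1 → N.lam l' ≤ N.lam l} with hreop
  -- basic inclusions
  have hncO : nc ⊆ s.O := fun l hl => hl.1
  have hremOH : rem ⊆ s.O ∪ s.H := by
    intro l hl
    rcases hl.1 with hl' | hl'
    · exact Or.inr hl'
    · exact Or.inl (hncO hl')
  have hreoprem : reop ⊆ rem := fun l hl => hl.1
  -- part 1
  have part1 : s'.O ∪ s'.H ⊆ s.O ∪ s.H := by
    intro l hl
    rw [hO, hH] at hl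
    rcases hl with (hl | hl) | hl
    · exact Or.inl hl.1
    · exact hremOH (hreoprem hl)
    · exact hremOH hl.1
  -- part 2 : disjointness
  have part2 : ∀ l ∈ s'.O, l ∉ s'.H := by
    intro l hl hl'
    rw [hH] at hl'
    rw [hO] at hl
    rcases hl with hl | hl
    · rcases hl'.1.1 with hin | hin
      · exact hdisj l hl.1 hin
      · exact hl.2 (Or.inr hin)
    · exact hl'.2 hl
  -- part 3 : H' nonempty → O' nonempty
  have part3 : s'.H.Nonempty → s'.O.Nonempty := by
    intro ⟨l, hl⟩
    rw [hH] at hl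
    have hlrem : l ∈ rem := hl.1
    have hremL : rem ⊆ N.L := by
      intro x hx
      rcases hremOH hx with h | h
      exacts [hOL h, hHL h]
    have hSfin : {x ∈ rem | x.1 = l.1}.Finite :=
      (hLfin.subset hremL).subset (fun x hx => hx.1)
    obtain ⟨m0, hm0, hm0max⟩ := Set.exists_max_image _ N.lam hSfin ⟨l, hlrem, rfl⟩
    have hm0reop : m0 ∈ reop := by
      refine ⟨hm0.1, fun l' hl' hl'1 => hm0max l' ⟨hl', by rw [hl'1, hm0.2]⟩⟩
    exact ⟨m0, by rw [hO]; exact Or.inr hm0reop⟩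
  -- part 4 : strict progress
  refine ⟨part1, part2, part3, ?_⟩
  intro hne
  obtain ⟨lstar, hlstar, hlmax⟩ := Set.exists_max_image s.O N.lam (hLfin.subset hOL) hne
  set n := lstar.1 with hn
  have hopenls : lstar ∈ openAt s n := ⟨hlstar, rfl⟩
  have hopenne : (openAt s n).Nonempty := ⟨lstar, hopenls⟩
  obtain ⟨han, hanmax⟩ := hsel n hopenne
  set b := a n with hb
  have hbO : b ∈ s.O := han.1
  have hbn : b.1 = n := han.2
  have hbmax : ∀ x ∈ s.O, N.lam x ≤ N.lam b :=
    fun x hx => le_trans (hlmax x hx) (hanmax lstar hopenls)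
  have hmc : MarkCond N s a n := by
    refine ⟨hopenne, fun l' hl' => ?_⟩
    obtain ⟨n', hn'ne, -, hn'op, rfl⟩ := hl'
    obtain ⟨han', -⟩ := hsel n' hn'op
    have hl'O : a n' ∈ s.O := han'.1
    have hne' : a n' ≠ b := by
      intro hEq
      exact hn'ne (by rw [← han'.2, hEq, hbn])
    exact lt_of_le_of_ne (hbmax _ hl'O) (N.distinct _ (hOL hl'O) _ (hOL hbO) hne')
  have hbnm : b ∈ nm := ⟨n, hmc, rfl⟩
  have hbnotnc : b ∉ nc := by
    intro hbc
    exact hbc.2.1 (by rw [hbn]; exact hmc)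
  have hbnotrem : b ∉ rem := by
    intro hbr
    rcases hbr.1 with h | h
    · exact hdisj b hbO h
    · exact hbnotnc h
  refine ⟨b, Or.inl hbO, ?_⟩
  intro hl
  rcases hl with hl | hl
  · rw [hO] at hl
    rcases hl with hl | hl
    · exact hl.2 (Or.inl (Or.inl hbnm))
    · exact hbnotrem (hreoprem hl)
  · rw [hH] at hl
    exact hbnotrem hl.1

/-- the distributed greedy algorithm terminates: there is a round
`t ≤ |L|` with `O (t+1) ∪ H (t+1) = ∅`. -/
theorem stmt0_terminates_in_finite_time {V : Type*} [Fintype V] (N : Net V)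
    (O H M C : ℕ → Set (V × V)) (htraj : IsTrajectory N O H M C) :
    ∃ t ≤ N.L.ncard, O (t + 1) ∪ H (t + 1) = ∅ := by
  obtain ⟨hO1, hH1, hM1, hC1, hstep⟩ := htraj
  by_contra hcon
  push_neg at hcon
  have hcon' : ∀ t ≤ N.L.ncard, (O (t+1) ∪ H (t+1)).Nonempty := hcon
  have hinv : ∀ m, 1 ≤ m → O m ⊆ N.L ∧ H m ⊆ N.L ∧ ∀ l ∈ O m, l ∉ H m := by
    intro m hm
    induction m, hm using Nat.le_induction with
    | base =>
      refine ⟨by rw [hO1], by rw [hH1]; exact Set.empty_subset _, by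
        rw [hH1]; intro l _ hl; exact hl⟩
    | succ m hm ih =>
      obtain ⟨h1, h2, h3⟩ := ih
      obtain ⟨p1, p2, -, -⟩ := step_facts N ⟨O m, H m, M m, C m⟩
        ⟨O (m+1), H (m+1), M (m+1), C (m+1)⟩ (hstep m hm) h1 h2 N.Lfin h3
      refine ⟨fun l hl => ?_, fun l hl => ?_, p2⟩
      · rcases p1 (Or.inl hl) with h | h
        exacts [h1 h, h2 h]
      · rcases p1 (Or.inr hl) with h | h
        exacts [h1 h, h2 h]
  have key : ∀ m, m ≤ N.L.ncard → (O (m+1) ∪ H (m+1)).ncard + m ≤ N.L.ncard := by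
    intro m
    induction m with
    | zero =>
      intro _
      rw [hO1, hH1, Set.union_empty, Nat.add_zero]
    | succ m ih =>
      intro hm
      have hm' : m ≤ N.L.ncard := Nat.le_of_succ_le hm
      have ih' := ih hm'
      obtain ⟨h1, h2, h3⟩ := hinv (m+1) (by omega)
      have hOne : (O (m+1)).Nonempty := by
        rcases hcon' m hm' with ⟨l, hl | hl⟩
        · exact ⟨l, hl⟩
        · rcases Nat.eq_zero_or_pos m with rfl | hmpos
          · rw [hH1] at hl; exact absurd hl (Set.notMem_empty l)
          · obtain ⟨q1, q2, q3⟩ := hinv m hmpos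
            obtain ⟨-, -, p3, -⟩ := step_facts N ⟨O m, H m, M m, C m⟩
              ⟨O (m+1), H (m+1), M (m+1), C (m+1)⟩ (hstep m hmpos) q1 q2 N.Lfin q3
            exact p3 ⟨l, hl⟩
      obtain ⟨p1, -, -, p4⟩ := step_facts N ⟨O (m+1), H (m+1), M (m+1), C (m+1)⟩
        ⟨O (m+1+1), H (m+1+1), M (m+1+1), C (m+1+1)⟩ (hstep (m+1) (by omega)) h1 h2 N.Lfin h3
      obtain ⟨b, hb, hbnot⟩ := p4 hOne
      have hss : O (m+1+1) ∪ H (m+1+1) ⊂ O (m+1) ∪ H (m+1) :=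
        ssubset_iff_subset_not_subset.mpr ⟨p1, fun hsub => hbnot (hsub hb)⟩
      have hfin : (O (m+1) ∪ H (m+1)).Finite := N.Lfin.subset (Set.union_subset h1 h2)
      have hlt := Set.ncard_lt_ncard hss hfin
      omega
  have hfinal := key N.L.ncard le_rfl
  obtain ⟨h1, h2, -⟩ := hinv (N.L.ncard + 1) (by omega)
  have hfin : (O (N.L.ncard+1) ∪ H (N.L.ncard+1)).Finite :=
    N.Lfin.subset (Set.union_subset h1 h2)
  have hz : (O (N.L.ncard+1) ∪ H (N.L.ncard+1)).ncard = 0 := by omega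
  exact Set.nonempty_iff_ne_empty.mp (hcon N.L.ncard le_rfl) ((Set.ncard_eq_zero hfin).mp hz)
end

section
/- For every round m, if O_m ≠ ∅ then the highest-priced link of O_m belongs to M_{m+1}: the globally maximum-priced OPEN link gets MARKED in that round. -/
open Classical

/-- for every round `m`, if `O m ≠ ∅` then the highest-priced link of
`O m` gets MARKED in that round, i.e. belongs to `M (m+1)`. -/
theorem stmt1_max_open_gets_marked {V : Type*} [Fintype V] (N : Net V)
    (O H M C : ℕ → Set (V × V)) (htraj : IsTrajectory N O H M C) :
    ∀ m, 1 ≤ m → (O m).Nonempty →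
      ∀ l ∈ O m, (∀ l' ∈ O m, N.lam l' ≤ N.lam l) → l ∈ M (m + 1) := by
  obtain ⟨hO1, hH1, _, _, hstep⟩ := htraj
  -- invariant: O m ∪ H m ⊆ L
  have hinv : ∀ m, 1 ≤ m → O m ⊆ N.L ∧ H m ⊆ N.L := by
    intro m hm
    induction m, hm using Nat.le_induction with
    | base => exact ⟨hO1.le, by rw [hH1]; exact Set.empty_subset _⟩
    | succ m hm ih =>
      obtain ⟨a, hsel, hO, hH, hM, hC⟩ := hstep m hm
      dsimp only at hO hH hM hC
      have hpool : (H m ∪ {l ∈ O m | ¬ MarkCond N ⟨O m, H m, M m, C m⟩ a l.1 ∧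
          ∃ l' ∈ Rset N ⟨O m, H m, M m, C m⟩ a l.1,
            N.lam l < N.lam l' ∧ linkDist N.G l l' < N.K}) ⊆ N.L := by
        rintro x (hx | hx)
        · exact ih.2 hx
        · exact ih.1 hx.1
      constructor
      · rw [hO]
        rintro x (hx | hx)
        · exact ih.1 hx.1
        · exact hpool (Set.diff_subset hx.1)
      · rw [hH]
        intro x hx
        exact hpool hx.1.1
  intro m hm _ l hl hmax
  obtain ⟨a, hsel, hO, hH, hM, hC⟩ := hstep m hm
  dsimp only at hO hH hM hC
  have hne' : (openAt ⟨O m, H m, M m, C m⟩ l.1).Nonempty := ⟨l, hl, rfl⟩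
  obtain ⟨han, hanmax⟩ := hsel l.1 hne'
  have hanO : a l.1 ∈ O m := han.1
  have h1 : N.lam l ≤ N.lam (a l.1) := hanmax l ⟨hl, rfl⟩
  have h2 : N.lam (a l.1) ≤ N.lam l := hmax _ hanO
  have heq : a l.1 = l := by
    by_contra hne
    exact N.distinct _ ((hinv m hm).1 hanO) _ ((hinv m hm).1 hl) hne (le_antisymm h2 h1)
  have hmark : MarkCond N ⟨O m, H m, M m, C m⟩ a l.1 := by
    refine ⟨hne', ?_⟩
    rintro l' ⟨n', hn'ne, _, hn'open, rfl⟩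
    obtain ⟨han', _⟩ := hsel n' hn'open
    have hle : N.lam (a n') ≤ N.lam l := hmax _ han'.1
    have hneq : a n' ≠ l := by
      intro h
      exact hn'ne (by rw [← han'.2, h])
    have : N.lam (a n') ≠ N.lam l :=
      N.distinct _ ((hinv m hm).1 han'.1) _ ((hinv m hm).1 hl) hneq
    rw [heq]
    exact lt_of_le_of_ne hle this
  rw [hM]
  exact Set.mem_union_right _ ⟨l.1, hmark, heq.symm⟩
end

section
/- For every round m, if O_m ≠ ∅ then M_m is a strict subset of M_{m+1}: at least one new link is MARKED in every round in which some link is OPEN. -/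
open Classical

lemma linkDist_self_lt {V : Type*} (G : SimpleGraph V) (l : V × V) (K : ℕ) (hK : 1 ≤ K) :
    linkDist G l l < K := by
  have h : linkDist G l l ≤ G.dist l.1 l.1 :=
    le_trans (min_le_left _ _) (min_le_left _ _)
  simp [SimpleGraph.dist_self] at h
  omega

lemma traj_inv {V : Type*} (N : Net V) (O H M C : ℕ → Set (V × V))
    (htraj : IsTrajectory N O H M C) :
    ∀ m, 1 ≤ m → (O m ⊆ N.L ∧ H m ⊆ N.L ∧ ∀ l ∈ O m, l ∉ M m) := by
  obtain ⟨hO1, hH1, hM1, hC1, hstep⟩ := htraj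
  intro m hm
  induction m, hm using Nat.le_induction with
  | base =>
      refine ⟨hO1.le, ?_, ?_⟩
      · simp [hH1]
      · simp [hM1]
  | succ m hm ih =>
      obtain ⟨hOL, hHL, hOM⟩ := ih
      obtain ⟨a, hsel, hO', hH', hM', hC'⟩ := hstep m hm
      simp only at hO' hH' hM' hC'
      constructor
      · rw [hO']
        rintro l (⟨hl, -⟩ | ⟨⟨hl, -⟩, -⟩)
        · exact hOL hl
        · rcases hl with hl | ⟨hl, -⟩
          · exact hHL hl
          · exact hOL hl
      constructor
      · rw [hH']
        rintro l ⟨⟨hl | ⟨hl, -⟩, -⟩, -⟩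
        · exact hHL hl
        · exact hOL hl
      · rw [hO', hM']
        rintro l (⟨hlO, hlnot⟩ | ⟨⟨hlpool, hlnc2⟩, -⟩) (hM | hNM)
        · exact hOM l hlO hM
        · exact hlnot (Or.inl (Or.inl hNM))
        · exact hlnc2 ⟨hlpool, l, Or.inl hM, linkDist_self_lt N.G l N.K N.hK⟩
        · exact hlnc2 ⟨hlpool, l, Or.inr hNM, linkDist_self_lt N.G l N.K N.hK⟩

/-- at least one new link is MARKED in every round in which some link
is OPEN: if `O m ≠ ∅` then `M m ⊂ M (m+1)`. -/
theorem stmt3_marked_strictly_grows {V : Type*} [Fintype V] (N : Net V)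
    (O H M C : ℕ → Set (V × V)) (htraj : IsTrajectory N O H M C) :
    ∀ m, 1 ≤ m → (O m).Nonempty → M m ⊂ M (m + 1) := by
  intro m hm hne
  obtain ⟨hOL, hHL, hOM⟩ := traj_inv N O H M C htraj m hm
  obtain ⟨a, hsel, hO', hH', hM', hC'⟩ := htraj.2.2.2.2 m hm
  simp only at hO' hH' hM' hC'
  classical
  set s : St V := ⟨O m, H m, M m, C m⟩ with hs
  obtain ⟨l₀, hl₀⟩ := hne
  have hl₀open : l₀ ∈ openAt s l₀.1 := ⟨hl₀, rfl⟩
  have hSne : (Finset.univ.filter (fun n => (openAt s n).Nonempty)).Nonempty :=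
    ⟨l₀.1, by simp [Finset.mem_filter]; exact ⟨l₀, hl₀open⟩⟩
  obtain ⟨n, hnS, hmax⟩ := Finset.exists_max_image _ (fun n => N.lam (a n)) hSne
  have hnopen : (openAt s n).Nonempty := by
    simpa [Finset.mem_filter] using hnS
  have hmark : MarkCond N s a n := by
    refine ⟨hnopen, ?_⟩
    rintro l' ⟨n', hn'ne, -, hn'open, rfl⟩
    have hn'S : n' ∈ Finset.univ.filter (fun n => (openAt s n).Nonempty) := by
      simp [Finset.mem_filter]; exact hn'open
    have hle : N.lam (a n') ≤ N.lam (a n) := hmax n' hn'S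
    have han : a n ∈ openAt s n := (hsel n hnopen).1
    have han' : a n' ∈ openAt s n' := (hsel n' hn'open).1
    have hneq : a n' ≠ a n := by
      intro heq
      exact hn'ne (han'.2.symm.trans (heq ▸ han.2))
    have hdneq : N.lam (a n') ≠ N.lam (a n) :=
      N.distinct (a n') (hOL han'.1) (a n) (hOL han.1) hneq
    exact lt_of_le_of_ne hle hdneq
  have hmem : a n ∈ M m ∪ {l | ∃ n, MarkCond N s a n ∧ l = a n} :=
    Or.inr ⟨n, hmark, rfl⟩
  have hnot : a n ∉ M m := hOM (a n) ((hsel n hnopen).1.1)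
  rw [hM']
  exact ⟨Set.subset_union_left, fun hsub => hnot (hsub hmem)⟩
end

section
/- For every round m, if O_m ≠ ∅ then O_{m+1} ∪ H_{m+1} is a strict subset of O_m ∪ H_m: the set of links that are OPEN or CHECK strictly decreases in every round in which some link is OPEN. -/
open Classical

/-- Core combinatorial lemma about one round, with the derived sets abstracted. -/
lemma step_core {V : Type*} (N : Net V) (s s' : St V) (a : V → V × V)
    (hsel : IsSelector N s a)
    (NM NC RO rem : Set (V × V))
    (hNM : ∀ n, MarkCond N s a n → a n ∈ NM)
    (hNCsub : NC ⊆ s.O)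
    (hNCmark : ∀ l ∈ NC, ¬ MarkCond N s a l.1)
    (hrem : rem ⊆ s.H ∪ NC)
    (hRO : RO ⊆ rem)
    (hO' : s'.O ⊆ (s.O \ (NM ∪ NC)) ∪ RO)
    (hH' : s'.H ⊆ rem \ RO)
    (hL : s.O ∪ s.H ⊆ N.L) (hdisj : Disjoint s.O s.H) :
    (s'.O ∪ s'.H ⊆ s.O ∪ s.H) ∧ Disjoint s'.O s'.H ∧
      (s.O.Nonempty → ∃ l ∈ s.O, l ∉ s'.O ∪ s'.H) := by
  have hremsub : rem ⊆ s.O ∪ s.H := by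
    intro x hx
    rcases hrem hx with hx | hx
    · exact Or.inr hx
    · exact Or.inl (hNCsub hx)
  refine ⟨?_, ?_, ?_⟩
  · -- subset
    intro x hx
    rcases hx with hx | hx
    · rcases hO' hx with hx | hx
      · exact Or.inl hx.1
      · exact hremsub (hRO hx)
    · exact hremsub (hH' hx).1
  · -- disjoint
    rw [Set.disjoint_left]
    intro x hxO hxH
    have hxH' := hH' hxH
    rcases hO' hxO with hx | hx
    · -- x ∈ s.O \ (NM ∪ NC); but x ∈ rem ⊆ s.H ∪ NC
      rcases hrem hxH'.1 with h | h
      · exact Set.disjoint_left.mp hdisj hx.1 h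
      · exact hx.2 (Or.inr h)
    · exact hxH'.2 hx
  · -- strictness witness
    rintro ⟨l0, hl0⟩
    obtain ⟨lstar, hlsO, hlsmax⟩ :=
      Set.exists_max_image s.O N.lam (N.Lfin.subset (fun x hx => hL (Or.inl hx))) ⟨l0, hl0⟩
    set n := lstar.1 with hn
    have hopen : (openAt s n).Nonempty := ⟨lstar, hlsO, rfl⟩
    obtain ⟨han, hanmax⟩ := hsel n hopen
    -- a n = lstar
    have h1 : N.lam lstar ≤ N.lam (a n) := hanmax lstar ⟨hlsO, rfl⟩
    have h2 : N.lam (a n) ≤ N.lam lstar := hlsmax _ han.1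
    have haeq : a n = lstar := by
      by_contra hne
      exact N.distinct _ (hL (Or.inl han.1)) _ (hL (Or.inl hlsO)) hne (le_antisymm h2 h1)
    -- MarkCond holds at n
    have hmark : MarkCond N s a n := by
      refine ⟨hopen, ?_⟩
      rintro l' ⟨n', hn'ne, -, hn'open, rfl⟩
      obtain ⟨han', -⟩ := hsel n' hn'open
      have hle : N.lam (a n') ≤ N.lam lstar := hlsmax _ han'.1
      have hne : a n' ≠ lstar := by
        intro h
        apply hn'ne
        rw [← han'.2, h]
      have : N.lam (a n') ≠ N.lam lstar :=
        N.distinct _ (hL (Or.inl han'.1)) _ (hL (Or.inl hlsO)) hne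
      rw [haeq]
      exact lt_of_le_of_ne hle this
    have hlsNM : lstar ∈ NM := haeq ▸ hNM n hmark
    have hnotrem : lstar ∉ rem := by
      intro h
      rcases hrem h with h | h
      · exact Set.disjoint_left.mp hdisj hlsO h
      · exact hNCmark _ h hmark
    refine ⟨lstar, hlsO, ?_⟩
    rintro (hx | hx)
    · rcases hO' hx with hx | hx
      · exact hx.2 (Or.inl hlsNM)
      · exact hnotrem (hRO hx)
    · exact hnotrem (hH' hx).1

/-- One `Step` preserves the invariant and strictly shrinks OPEN ∪ CHECK when OPEN ≠ ∅. -/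
lemma step_main {V : Type*} (N : Net V) (s s' : St V)
    (hL : s.O ∪ s.H ⊆ N.L) (hdisj : Disjoint s.O s.H) (hstep : Step N s s') :
    (s'.O ∪ s'.H ⊆ s.O ∪ s.H) ∧ Disjoint s'.O s'.H ∧
      (s.O.Nonempty → ∃ l ∈ s.O, l ∉ s'.O ∪ s'.H) := by
  obtain ⟨a, hsel, hO, hH, hM, hC⟩ := hstep
  set newMarked : Set (V × V) := {l | ∃ n, MarkCond N s a n ∧ l = a n} with hnmdef
  set newCheck : Set (V × V) :=
    {l ∈ s.O | ¬ MarkCond N s a l.1 ∧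
      ∃ l' ∈ Rset N s a l.1, N.lam l < N.lam l' ∧ linkDist N.G l l' < N.K} with hncdef
  set pool : Set (V × V) := s.H ∪ newCheck with hpooldef
  set closed2 : Set (V × V) :=
    {l ∈ pool | ∃ j ∈ s.M ∪ newMarked, linkDist N.G l j < N.K} with hc2def
  set rem : Set (V × V) := pool \ closed2 with hremdef
  set reopened : Set (V × V) :=
    {l ∈ rem | ∀ l' ∈ rem, l'.1 = l.1 → N.lam l' ≤ N.lam l} with hrodef
  refine step_core N s s' a hsel newMarked newCheck reopened rem
    ?_ ?_ ?_ ?_ ?_ ?_ ?_ hL hdisj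
  · intro n hmc
    exact ⟨n, hmc, rfl⟩
  · intro l hl
    exact hl.1
  · intro l hl
    exact hl.2.1
  · intro l hl
    exact hl.1
  · intro l hl
    exact hl.1
  · rw [hO]
    intro x hx
    rcases hx with hx | hx
    · refine Or.inl ⟨hx.1, ?_⟩
      rintro (h | h)
      · exact hx.2 (Or.inl (Or.inl h))
      · exact hx.2 (Or.inr h)
    · exact Or.inr hx
  · rw [hH]

/-- the set of OPEN-or-CHECK links strictly decreases in every round in
which some link is OPEN: if `O m ≠ ∅` then `O (m+1) ∪ H (m+1) ⊂ O m ∪ H m`. -/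
theorem stmt4_open_check_strictly_decreases {V : Type*} [Fintype V] (N : Net V)
    (O H M C : ℕ → Set (V × V)) (htraj : IsTrajectory N O H M C) :
    ∀ m, 1 ≤ m → (O m).Nonempty → O (m + 1) ∪ H (m + 1) ⊂ O m ∪ H m := by
  obtain ⟨hO1, hH1, hM1, hC1, hstep⟩ := htraj
  have inv : ∀ m, 1 ≤ m → (O m ∪ H m ⊆ N.L ∧ Disjoint (O m) (H m)) := by
    intro m hm
    induction m, hm using Nat.le_induction with
    | base =>
      constructor
      · rw [hO1, hH1]; simp
      · rw [hH1]; exact Set.disjoint_empty _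
    | succ m hm ih =>
      obtain ⟨hsub, hdis, -⟩ :=
        step_main N ⟨O m, H m, M m, C m⟩ ⟨O (m+1), H (m+1), M (m+1), C (m+1)⟩
          ih.1 ih.2 (hstep m hm)
      exact ⟨hsub.trans ih.1, hdis⟩
  intro m hm hne
  obtain ⟨hsub, -, hwit⟩ :=
    step_main N ⟨O m, H m, M m, C m⟩ ⟨O (m+1), H (m+1), M (m+1), C (m+1)⟩
      (inv m hm).1 (inv m hm).2 (hstep m hm)
  obtain ⟨l, hl, hlnot⟩ := hwit hne
  exact (Set.ssubset_iff_of_subset hsub).mpr ⟨l, Or.inl hl, hlnot⟩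
end

section
/- For every round m and every link i ∈ C_m, there exists a link j ∈ M_m with d(i,j) < K: every CLOSED link interferes with some MARKED link. -/
open Classical

/-- every CLOSED link interferes with some MARKED link:
for every round `m` and `i ∈ C m` there is `j ∈ M m` with `d(i,j) < K`. -/
theorem stmt5_closed_interferes_with_marked {V : Type*} [Fintype V] (N : Net V)
    (O H M C : ℕ → Set (V × V)) (htraj : IsTrajectory N O H M C) :
    ∀ m, 1 ≤ m → ∀ i ∈ C m, ∃ j ∈ M m, linkDist N.G i j < N.K := by
  obtain ⟨hO1, hH1, hM1, hC1, hstep⟩ := htraj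
  intro m
  induction m with
  | zero => intro h; omega
  | succ m ih =>
    intro _
    rcases Nat.eq_zero_or_pos m with h1 | h1
    · subst h1
      intro i hi
      rw [hC1] at hi
      exact absurd hi (Set.notMem_empty i)
    · have hm : 1 ≤ m := h1
      obtain ⟨a, hsel, hO, hH, hM, hC⟩ := hstep m hm
      dsimp only at hM hC
      intro i hi
      rw [hC] at hi
      rcases hi with (hi | hi) | hi
      · obtain ⟨j, hjM, hjd⟩ := ih hm i hi
        exact ⟨j, by rw [hM]; exact Or.inl hjM, hjd⟩
      · -- closed1
        obtain ⟨hiO, hmc, hne⟩ := hi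
        refine ⟨a i.1, ?_, ?_⟩
        · rw [hM]; exact Or.inr ⟨i.1, hmc, rfl⟩
        · have hsel' := hsel i.1 hmc.1
          have h1eq : (a i.1).1 = i.1 := hsel'.1.2
          have : linkDist N.G i (a i.1) ≤ N.G.dist i.1 (a i.1).1 := by
            unfold linkDist
            exact le_trans (min_le_left _ _) (min_le_left _ _)
          rw [h1eq, SimpleGraph.dist_self] at this
          exact lt_of_le_of_lt this N.hK
      · -- closed2
        obtain ⟨_, j, hjM', hjd⟩ := hi
        exact ⟨j, by rw [hM]; exact hjM', hjd⟩
end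

section
/- For every round m and every link i ∈ H_m, there exists a link j ∈ O_m with λ(j) > λ(i): every CHECK link is dominated in price by some OPEN link. -/
open Classical

/-- every CHECK link is dominated in price by some OPEN link:
for every round `m` and `i ∈ H m` there is `j ∈ O m` with `λ j > λ i`. -/
theorem stmt6_check_dominated_by_open {V : Type*} [Fintype V] (N : Net V)
    (O H M C : ℕ → Set (V × V)) (htraj : IsTrajectory N O H M C) :
    ∀ m, 1 ≤ m → ∀ i ∈ H m, ∃ j ∈ O m, N.lam i < N.lam j := by
  obtain ⟨hO1, hH1, hM1, hC1, hstep⟩ := htraj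
  intro m hm i hi
  match m, hm with
  | 1, _ => rw [hH1] at hi; exact absurd hi (Set.notMem_empty i)
  | (n+2), _ =>
    obtain ⟨a, hsel, hO', hH', hM', hC'⟩ := hstep (n+1) (Nat.le_add_left 1 n)
    replace hi : i ∈ St.H (⟨O (n+1+1), H (n+1+1), M (n+1+1), C (n+1+1)⟩ : St V) := hi
    rw [hH'] at hi
    obtain ⟨hirem, hinre⟩ := hi
    -- the set of remaining links at node i.1
    set rem : Set (V × V) :=
      (H (n+1) ∪ {l ∈ O (n+1) |
          ¬MarkCond N ⟨O (n+1), H (n+1), M (n+1), C (n+1)⟩ a l.1 ∧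
          ∃ l' ∈ Rset N ⟨O (n+1), H (n+1), M (n+1), C (n+1)⟩ a l.1,
            N.lam l < N.lam l' ∧ linkDist N.G l l' < N.K}) \
        {l ∈ H (n+1) ∪ {l ∈ O (n+1) |
          ¬MarkCond N ⟨O (n+1), H (n+1), M (n+1), C (n+1)⟩ a l.1 ∧
          ∃ l' ∈ Rset N ⟨O (n+1), H (n+1), M (n+1), C (n+1)⟩ a l.1,
            N.lam l < N.lam l' ∧ linkDist N.G l l' < N.K} |
          ∃ j ∈ M (n+1) ∪ {l | ∃ n',
              MarkCond N ⟨O (n+1), H (n+1), M (n+1), C (n+1)⟩ a n' ∧ l = a n'},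
            linkDist N.G l j < N.K} with hrem
    have hSfin : ({l ∈ rem | l.1 = i.1} : Set (V × V)).Finite := Set.toFinite _
    have hSne : ({l ∈ rem | l.1 = i.1} : Set (V × V)).Nonempty := ⟨i, hirem, rfl⟩
    obtain ⟨j, ⟨hjrem, hj1⟩, hjmax0⟩ := Set.Finite.exists_maximalFor N.lam _ hSfin hSne
    have hjmax : ∀ l' ∈ ({l ∈ rem | l.1 = i.1} : Set (V × V)), N.lam j ≤ N.lam l' → N.lam j = N.lam l' :=
      fun l' hl' h => le_antisymm h (hjmax0 hl' h)
    have hjmax' : ∀ l' ∈ rem, l'.1 = j.1 → N.lam l' ≤ N.lam j := by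
      intro l' hl' hl1
      by_contra hlt
      push_neg at hlt
      have := hjmax l' ⟨hl', hl1.trans hj1⟩ hlt.le
      rw [this] at hlt
      exact lt_irrefl _ hlt
    have hjre : j ∈ ({l ∈ rem | ∀ l' ∈ rem, l'.1 = l.1 → N.lam l' ≤ N.lam l} :
        Set (V × V)) := ⟨hjrem, hjmax'⟩
    have hjO : j ∈ O (n+2) := by
      show j ∈ St.O (⟨O (n+1+1), H (n+1+1), M (n+1+1), C (n+1+1)⟩ : St V)
      rw [hO']; exact Or.inr hjre
    refine ⟨j, hjO, ?_⟩
    -- i is not reopened, so some l' ∈ rem at i.1 has λ i < λ l'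
    have : ¬ (i ∈ rem ∧ ∀ l' ∈ rem, l'.1 = i.1 → N.lam l' ≤ N.lam i) := hinre
    push_neg at this
    obtain ⟨l', hl'rem, hl'1, hl'gt⟩ := this hirem
    calc N.lam i < N.lam l' := hl'gt
      _ ≤ N.lam j := hjmax' l' hl'rem (hl'1.trans hj1.symm)
end

section
/- For every round m, if O_m ∪ H_m ≠ ∅ then the highest-priced link of O_m ∪ H_m belongs to O_m: at the beginning of a round, the globally highest-priced link among links that are neither CLOSED nor MARKED is not in CHECK state. -/
open Classical

/-- at the beginning of a round, the globally highest-priced link among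
links that are neither CLOSED nor MARKED (i.e. the highest-priced link of `O m ∪ H m`)
is OPEN, not in CHECK state. -/
theorem stmt7_max_non_closed_non_marked_is_open {V : Type*} [Fintype V] (N : Net V)
    (O H M C : ℕ → Set (V × V)) (htraj : IsTrajectory N O H M C) :
    ∀ m, 1 ≤ m → (O m ∪ H m).Nonempty →
      ∀ l ∈ O m ∪ H m, (∀ l' ∈ O m ∪ H m, N.lam l' ≤ N.lam l) → l ∈ O m := by
  rintro m hm hne l hl hmax
  by_contra hlO
  have hlH : l ∈ H m := hl.resolve_left hlO
  match m, hm with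
  | 1, _ =>
    rw [htraj.2.1] at hlH
    exact hlH
  | (k+2), _ =>
    obtain ⟨a, hsel, hO, hH, hM, hC⟩ := htraj.2.2.2.2 (k+1) (Nat.le_add_left 1 k)
    dsimp only at hO hH
    have hlH2 : l ∈ H (k+1+1) := hlH
    rw [hH] at hlH2
    obtain ⟨hrem, hnro⟩ := hlH2
    have hnro' := Not.intro fun h => hnro ⟨hrem, h⟩
    push_neg at hnro'
    obtain ⟨l', hl'rem, heq, hgt⟩ := hnro'
    have key : ∀ (X q r : Set (V × V)) (x : V × V), x ∈ r → x ∈ (X ∪ q) ∪ (r \ q) := by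
      intro X q r x hx
      by_cases h : x ∈ q
      · exact Or.inl (Or.inr h)
      · exact Or.inr ⟨hx, h⟩
    have hl'in : l' ∈ O (k+2) ∪ H (k+2) := by
      show l' ∈ O (k+1+1) ∪ H (k+1+1)
      rw [hO, hH]
      exact key _ _ _ _ hl'rem
    exact absurd (hmax l' hl'in) (not_le.mpr hgt)
end

section
/- For every round m, the set M_m of MARKED links is a K-valid matching: any two distinct MARKED links l, l' satisfy d(l,l') ≥ K. -/
open Classical

section StmtNineAux

variable {V : Type*}

lemma linkDist_comm' (G : SimpleGraph V) (l l' : V × V) :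
    linkDist G l l' = linkDist G l' l := by
  unfold linkDist
  rw [SimpleGraph.dist_comm (u := l.1) (v := l'.1), SimpleGraph.dist_comm (u := l.1) (v := l'.2),
    SimpleGraph.dist_comm (u := l.2) (v := l'.1), SimpleGraph.dist_comm (u := l.2) (v := l'.2)]
  omega

lemma linkDist_self_lt_s9 (N : Net V) (l : V × V) : linkDist N.G l l < N.K := by
  have h0 : N.G.dist l.1 l.1 = 0 := SimpleGraph.dist_self
  have := N.hK
  unfold linkDist
  omega

lemma sources_close (N : Net V) {l l' : V × V} (hl : l ∈ N.L) (hl' : l' ∈ N.L)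
    (h : linkDist N.G l l' < N.K) : N.G.dist l.1 l'.1 ≤ N.K + 1 := by
  have h1 : N.G.dist l.1 l.2 = 1 := SimpleGraph.dist_eq_one_iff_adj.mpr (N.adj l hl)
  have h2 : N.G.dist l'.2 l'.1 = 1 := by
    rw [SimpleGraph.dist_comm]; exact SimpleGraph.dist_eq_one_iff_adj.mpr (N.adj l' hl')
  have tA : N.G.dist l.1 l'.1 ≤ N.G.dist l.1 l'.2 + N.G.dist l'.2 l'.1 :=
    N.conn.dist_triangle
  have tB : N.G.dist l.1 l'.1 ≤ N.G.dist l.1 l.2 + N.G.dist l.2 l'.1 :=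
    N.conn.dist_triangle
  have tC : N.G.dist l.2 l'.1 ≤ N.G.dist l.2 l'.2 + N.G.dist l'.2 l'.1 :=
    N.conn.dist_triangle
  unfold linkDist at h
  omega

end StmtNineAux

section StmtNineInv

variable {V : Type*}

/-- Invariant maintained by the distributed algorithm. -/
def Inv9 (N : Net V) (s : St V) : Prop :=
  s.O ⊆ N.L ∧ s.H ⊆ N.L ∧ s.M ⊆ N.L ∧ Disjoint s.O s.H ∧
  KValid N s.M ∧
  (∀ l ∈ s.O, ∀ j ∈ s.M, N.K ≤ linkDist N.G l j) ∧
  (∀ l ∈ s.H, ∀ j ∈ s.M, N.K ≤ linkDist N.G l j)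

lemma step_inv9 (N : Net V) {s s' : St V} (hinv : Inv9 N s)
    (hstep : Step N s s') : Inv9 N s' := by
  obtain ⟨hOL, hHL, hML, hOH, hKV, hOM, hHM⟩ := hinv
  obtain ⟨a, hsel, hO', hH', hM', hC'⟩ := hstep
  set newMarked : Set (V × V) := {l | ∃ n, MarkCond N s a n ∧ l = a n} with hnmdef
  set closed1 : Set (V × V) := {l ∈ s.O | MarkCond N s a l.1 ∧ l ≠ a l.1} with hc1def
  set newCheck : Set (V × V) :=
    {l ∈ s.O | ¬ MarkCond N s a l.1 ∧
      ∃ l' ∈ Rset N s a l.1, N.lam l < N.lam l' ∧ linkDist N.G l l' < N.K} with hncdef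
  set M' : Set (V × V) := s.M ∪ newMarked with hM'def
  set pool : Set (V × V) := s.H ∪ newCheck with hpooldef
  set closed2 : Set (V × V) := {l ∈ pool | ∃ j ∈ M', linkDist N.G l j < N.K} with hc2def
  set rem : Set (V × V) := pool \ closed2 with hremdef
  set reopened : Set (V × V) := {l ∈ rem | ∀ l' ∈ rem, l'.1 = l.1 → N.lam l' ≤ N.lam l}
    with hropdef
  -- basic subset facts
  have hnmO : newMarked ⊆ s.O := by
    rintro _ ⟨n, hn, rfl⟩; exact (hsel n hn.1).1.1
  have hncO : newCheck ⊆ s.O := fun l hl => hl.1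
  have hpoolL : pool ⊆ N.L := Set.union_subset hHL (hncO.trans hOL)
  have hremL : rem ⊆ N.L := (Set.diff_subset).trans hpoolL
  have hropsub : reopened ⊆ rem := fun l hl => hl.1
  -- an OPEN link that survives Phase 1 cannot interfere with a newly marked link
  have key : ∀ l ∈ s.O, l ∉ newMarked ∪ closed1 ∪ newCheck →
      ∀ n, MarkCond N s a n → ¬ linkDist N.G l (a n) < N.K := by
    intro l hlO hlns n hn hlt
    have han := hsel n hn.1
    have hanO : a n ∈ s.O := han.1.1
    have hansrc : (a n).1 = n := han.1.2
    by_cases hsrc : MarkCond N s a l.1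
    · by_cases heq : l = a l.1
      · exact hlns (Or.inl (Or.inl ⟨l.1, hsrc, heq⟩))
      · exact hlns (Or.inl (Or.inr ⟨hlO, hsrc, heq⟩))
    · have hne : l.1 ≠ n := fun h => hsrc (h ▸ hn)
      have hdist : N.G.dist l.1 n ≤ N.K + 1 := by
        have := sources_close N (hOL hlO) (hOL hanO) hlt
        rwa [hansrc] at this
      have hRn : a n ∈ Rset N s a l.1 := ⟨n, hne.symm, hdist, hn.1, rfl⟩
      have hlam : N.lam l < N.lam (a n) := by
        have h1 : N.lam l ≤ N.lam (a l.1) := (hsel l.1 ⟨l, hlO, rfl⟩).2 l ⟨hlO, rfl⟩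
        have hRl : a l.1 ∈ Rset N s a n :=
          ⟨l.1, hne, by rwa [SimpleGraph.dist_comm], ⟨l, hlO, rfl⟩, rfl⟩
        have h2 := hn.2 _ hRl
        linarith
      exact hlns (Or.inr ⟨hlO, hsrc, a n, hRn, hlam, hlt⟩)
  -- distinct newly marked links do not interfere
  have hnm2 : ∀ l ∈ newMarked, ∀ l' ∈ newMarked, l ≠ l' → N.K ≤ linkDist N.G l l' := by
    rintro _ ⟨n, hn, rfl⟩ _ ⟨n', hn', rfl⟩ hne
    by_contra hlt
    push_neg at hlt
    have han := hsel n hn.1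
    have han' := hsel n' hn'.1
    have hnn' : n ≠ n' := by
      intro h; exact hne (by rw [h])
    have hd : N.G.dist n n' ≤ N.K + 1 := by
      have := sources_close N (hOL han.1.1) (hOL han'.1.1) hlt
      rwa [han.1.2, han'.1.2] at this
    have h1 : N.lam (a n') < N.lam (a n) := hn.2 _ ⟨n', hnn'.symm, hd, hn'.1, rfl⟩
    have h2 : N.lam (a n) < N.lam (a n') :=
      hn'.2 _ ⟨n, hnn', by rwa [SimpleGraph.dist_comm], hn.1, rfl⟩
    linarith
  -- links in `rem` do not interfere with links of `M'`
  have hrem : ∀ l ∈ rem, ∀ j ∈ M', N.K ≤ linkDist N.G l j := by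
    intro l hl j hj
    by_contra h
    push_neg at h
    exact hl.2 ⟨hl.1, j, hj, h⟩
  -- surviving OPEN links do not interfere with links of `M'`
  have hOsurv : ∀ l ∈ s.O \ (newMarked ∪ closed1 ∪ newCheck), ∀ j ∈ M',
      N.K ≤ linkDist N.G l j := by
    rintro l ⟨hlO, hlns⟩ j hj
    rcases hj with hjM | ⟨n, hn, rfl⟩
    · exact hOM l hlO j hjM
    · by_contra h
      push_neg at h
      exact key l hlO hlns n hn h
  refine ⟨?_, ?_, ?_, ?_, ?_, ?_, ?_⟩
  · rw [hO']
    exact Set.union_subset ((Set.diff_subset).trans hOL) (hropsub.trans hremL)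
  · rw [hH']
    exact (Set.diff_subset).trans hremL
  · rw [hM']
    exact Set.union_subset hML (hnmO.trans hOL)
  · rw [hO', hH']
    rw [Set.disjoint_left]
    rintro l (⟨hlO, hlns⟩ | hlrop) ⟨hlrem, hlnrop⟩
    · rcases hlrem.1 with hlH | hlnc
      · exact (Set.disjoint_left.mp hOH hlO) hlH
      · exact hlns (Or.inr hlnc)
    · exact hlnrop hlrop
  · rw [hM']
    intro l hl l' hl' hne
    rcases hl with hlM | hlnm
    · rcases hl' with hl'M | hl'nm
      · exact hKV l hlM l' hl'M hne
      · rw [linkDist_comm']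
        exact hOM l' (hnmO hl'nm) l hlM
    · rcases hl' with hl'M | hl'nm
      · exact hOM l (hnmO hlnm) l' hl'M
      · exact hnm2 l hlnm l' hl'nm hne
  · rw [hO', hM']
    intro l hl j hj
    rcases hl with hl | hl
    · exact hOsurv l hl j hj
    · exact hrem l (hropsub hl) j hj
  · rw [hH', hM']
    intro l hl j hj
    exact hrem l hl.1 j hj

end StmtNineInv
/-- for every round `m`, the set `M m` of MARKED links is a `K`-valid
matching: distinct MARKED links are at link distance `≥ K`. -/
theorem stmt9_marked_is_K_valid {V : Type*} [Fintype V] (N : Net V)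
    (O H M C : ℕ → Set (V × V)) (htraj : IsTrajectory N O H M C) :
    ∀ m, 1 ≤ m → KValid N (M m) := by
  obtain ⟨hO1, hH1, hM1, hC1, hstep⟩ := htraj
  have hinv : ∀ m, 1 ≤ m → Inv9 N ⟨O m, H m, M m, C m⟩ := by
    intro m hm
    induction m, hm using Nat.le_induction with
    | base =>
      refine ⟨by rw [hO1], by simp [hH1], by simp [hM1], by simp [hH1],
        by simp [KValid, hM1], by simp [hM1], by simp [hM1]⟩
    | succ m hm ih => exact step_inv9 N ih (hstep m hm)
  intro m hm
  exact (hinv m hm).2.2.2.2.1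
end

section
/- For every round m, no OPEN or CHECK link interferes with any MARKED link: for all l ∈ O_m ∪ H_m and all j ∈ M_m, d(l,j) ≥ K. -/
open Classical

private lemma source_dist_le {V : Type*} (N : Net V) {l j : V × V}
    (hl : l ∈ N.L) (hj : j ∈ N.L) (h : linkDist N.G l j < N.K) :
    N.G.dist l.1 j.1 ≤ N.K + 1 := by
  have hl2 : N.G.dist l.1 l.2 = 1 := (SimpleGraph.dist_eq_one_iff_adj).2 (N.adj l hl)
  have hj2 : N.G.dist j.2 j.1 = 1 := by
    rw [SimpleGraph.dist_comm]; exact (SimpleGraph.dist_eq_one_iff_adj).2 (N.adj j hj)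
  unfold linkDist at h
  rw [min_lt_iff, min_lt_iff, min_lt_iff] at h
  rcases h with (h | h) | (h | h)
  · omega
  · have t := N.conn.dist_triangle (u := l.1) (v := j.2) (w := j.1)
    omega
  · have t := N.conn.dist_triangle (u := l.1) (v := l.2) (w := j.1)
    omega
  · have t1 := N.conn.dist_triangle (u := l.1) (v := l.2) (w := j.1)
    have t2 := N.conn.dist_triangle (u := l.2) (v := j.2) (w := j.1)
    omega

/-- no OPEN or CHECK link interferes with any MARKED link:
for every round `m`, `l ∈ O m ∪ H m` and `j ∈ M m`, we have `d(l,j) ≥ K`. -/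
theorem stmt10_open_check_far_from_marked {V : Type*} [Fintype V] (N : Net V)
    (O H M C : ℕ → Set (V × V)) (htraj : IsTrajectory N O H M C) :
    ∀ m, 1 ≤ m → ∀ l ∈ O m ∪ H m, ∀ j ∈ M m, N.K ≤ linkDist N.G l j := by
  obtain ⟨hO1, hH1, hM1, hC1, hstep⟩ := htraj
  suffices key : ∀ m, 1 ≤ m → (O m ∪ H m ⊆ N.L) ∧
      (∀ l ∈ O m ∪ H m, ∀ j ∈ M m, N.K ≤ linkDist N.G l j) by
    intro m hm
    exact (key m hm).2
  intro m hm
  induction m with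
  | zero => omega
  | succ m ih =>
    rcases Nat.lt_or_ge m 1 with h1 | hm'
    · interval_cases m
      rw [hO1, hH1, hM1]
      refine ⟨by simp, ?_⟩
      intro l _ j hj
      exact absurd hj (Set.notMem_empty j)
    · obtain ⟨hsub, hfar⟩ := ih hm'
      obtain ⟨a, hsel, hO', hH', hM', hC'⟩ := hstep m hm'
      dsimp only at hO' hH' hM' hC'
      set s : St V := ⟨O m, H m, M m, C m⟩ with hs
      constructor
      · -- subset of L
        intro l hl
        rcases hl with hl | hl
        · rw [hO'] at hl
          rcases hl with ⟨hl, _⟩ | ⟨⟨hl, _⟩, _⟩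
          · exact hsub (Or.inl hl)
          · rcases hl with hl | ⟨hl, _⟩
            · exact hsub (Or.inr hl)
            · exact hsub (Or.inl hl)
        · rw [hH'] at hl
          rcases hl.1.1 with h | ⟨h, _⟩
          · exact hsub (Or.inr h)
          · exact hsub (Or.inl h)
      · -- distance invariant
        intro l hl j hj
        rw [hM'] at hj
        by_contra hK
        push_neg at hK
        rcases hl with hl | hl
        · rw [hO'] at hl
          rcases hl with ⟨hlO, hlnot⟩ | hlre
          · rcases hj with hj | ⟨n, hmark, rfl⟩
            · exact absurd hK (not_lt.2 (hfar l (Or.inl hlO) j hj))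
            · have hane : (openAt s n).Nonempty := hmark.1
              obtain ⟨hanO, hanmax⟩ := hsel n hane
              have haL : a n ∈ N.L := hsub (Or.inl hanO.1)
              have hlL : l ∈ N.L := hsub (Or.inl hlO)
              have hd : N.G.dist l.1 (a n).1 ≤ N.K + 1 := source_dist_le N hlL haL hK
              rw [hanO.2] at hd
              by_cases hn : n = l.1
              · subst hn
                by_cases heq : l = a l.1
                · exact hlnot (Or.inl (Or.inl ⟨l.1, hmark, heq⟩))
                · exact hlnot (Or.inl (Or.inr ⟨hlO, hmark, heq⟩))
              · have hMC : ¬ MarkCond N s a l.1 := by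
                  intro hmc
                  by_cases heq : l = a l.1
                  · exact hlnot (Or.inl (Or.inl ⟨l.1, hmc, heq⟩))
                  · exact hlnot (Or.inl (Or.inr ⟨hlO, hmc, heq⟩))
                have hne1 : (openAt s l.1).Nonempty := ⟨l, hlO, rfl⟩
                have hR1 : a l.1 ∈ Rset N s a n :=
                  ⟨l.1, fun h => hn h.symm, by rwa [SimpleGraph.dist_comm], hne1, rfl⟩
                have hlt1 : N.lam (a l.1) < N.lam (a n) := hmark.2 _ hR1
                have hle : N.lam l ≤ N.lam (a l.1) := (hsel l.1 hne1).2 l ⟨hlO, rfl⟩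
                have hR2 : a n ∈ Rset N s a l.1 := ⟨n, hn, hd, hane, rfl⟩
                exact hlnot (Or.inr
                  (⟨hlO, hMC, a n, hR2, lt_of_le_of_lt hle hlt1, hK⟩))
          · exact hlre.1.2 ⟨hlre.1.1, j, hj, hK⟩
        · rw [hH'] at hl
          exact hl.1.2 ⟨hl.1.1, j, hj, hK⟩
end

section
/- If the distributed greedy algorithm terminates after round t (i.e., O_{t+1} ∪ H_{t+1} = ∅), then M_{t+1} = L_C: the distributed greedy algorithm and the centralized greedy algorithm schedule exactly the same set of links. -/
open Classical

namespace Stmt13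

lemma linkDist_comm {V : Type*} (G : SimpleGraph V) (l j : V × V) :
    linkDist G l j = linkDist G j l := by
  have h11 := SimpleGraph.dist_comm (G := G) (u := l.1) (v := j.1)
  have h12 := SimpleGraph.dist_comm (G := G) (u := l.1) (v := j.2)
  have h21 := SimpleGraph.dist_comm (G := G) (u := l.2) (v := j.1)
  have h22 := SimpleGraph.dist_comm (G := G) (u := l.2) (v := j.2)
  unfold linkDist; omega

lemma linkDist_le_fst {V : Type*} (G : SimpleGraph V) (l j : V × V) :
    linkDist G l j ≤ G.dist l.1 j.1 := by
  unfold linkDist; omega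

/-- interfering links have close sources -/
lemma close_nodes {V : Type*} {G : SimpleGraph V} (hconn : G.Connected) {K : ℕ}
    {l l' : V × V} (hl : G.Adj l.1 l.2) (hl' : G.Adj l'.1 l'.2)
    (h : linkDist G l l' < K) : G.dist l.1 l'.1 ≤ K + 1 := by
  have e1 : G.dist l.1 l.2 = 1 := SimpleGraph.dist_eq_one_iff_adj.mpr hl
  have e2 : G.dist l'.2 l'.1 = 1 := by
    rw [SimpleGraph.dist_comm]; exact SimpleGraph.dist_eq_one_iff_adj.mpr hl'
  have t1 : G.dist l.1 l'.1 ≤ G.dist l.1 l.2 + G.dist l.2 l'.1 :=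
    hconn.dist_triangle
  have t2 : G.dist l.2 l'.1 ≤ G.dist l.2 l'.2 + G.dist l'.2 l'.1 :=
    hconn.dist_triangle
  have t3 : G.dist l.1 l'.1 ≤ G.dist l.1 l'.2 + G.dist l'.2 l'.1 :=
    hconn.dist_triangle
  unfold linkDist at h; omega

lemma greedy_mono {V : Type*} (N : Net V) (ls : List (V × V)) :
    ∀ W, W ⊆ greedyList N ls W := by
  induction ls with
  | nil => intro W; simp [greedyList]
  | cons x ls ih =>
    intro W l hl
    show l ∈ greedyList N ls _
    apply ih
    split
    · exact Set.mem_insert_of_mem _ hl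
    · exact hl

lemma greedy_subset {V : Type*} (N : Net V) (ls : List (V × V)) :
    ∀ W, greedyList N ls W ⊆ W ∪ {x | x ∈ ls} := by
  induction ls with
  | nil => intro W; simp [greedyList]
  | cons x ls ih =>
    intro W l hl
    have := ih _ hl
    rcases this with h | h
    · split at h
      · rcases h with h | h
        · subst h; right; simp
        · left; exact h
      · left; exact h
    · right; simp only [Set.mem_setOf_eq] at h ⊢; exact List.mem_cons_of_mem _ h

lemma greedy_valid {V : Type*} (N : Net V) (ls : List (V × V)) :
    ∀ W, KValid N W → KValid N (greedyList N ls W) := by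
  induction ls with
  | nil => intro W h; simpa [greedyList] using h
  | cons x ls ih =>
    intro W h
    show KValid N (greedyList N ls _)
    apply ih
    split
    · assumption
    · exact h

end Stmt13

namespace Stmt13

lemma greedy_char {V : Type*} (N : Net V) (ls : List (V × V)) :
    ∀ W, ls.Pairwise (fun a b => N.lam b < N.lam a) → KValid N W →
      (∀ w ∈ W, ∀ x ∈ ls, N.lam x < N.lam w) →
      ∀ l, l ∈ greedyList N ls W ↔
        l ∈ W ∨ (l ∈ ls ∧ ∀ j ∈ greedyList N ls W,
          N.lam l < N.lam j → N.K ≤ linkDist N.G l j) := by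
  induction ls with
  | nil => intro W _ _ _ l; simp [greedyList]
  | cons x ls ih =>
    intro W hsort hW hWls l
    obtain ⟨hx, hls⟩ := List.pairwise_cons.mp hsort
    by_cases hval : KValid N (insert x W)
    · have hgl : greedyList N (x :: ls) W = greedyList N ls (insert x W) := by
        show greedyList N ls _ = _
        rw [if_pos hval]
      rw [hgl]
      have hW'ls : ∀ w ∈ insert x W, ∀ y ∈ ls, N.lam y < N.lam w := by
        intro w hw y hy
        rcases hw with rfl | hw
        · exact hx y hy
        · exact hWls w hw y (List.mem_cons_of_mem _ hy)
      have IH := ih (insert x W) hls hval hW'ls l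
      have hSval : KValid N (greedyList N ls (insert x W)) :=
        greedy_valid N ls _ hval
      constructor
      · intro hl
        rcases (IH.mp hl) with (rfl | hlW) | ⟨hlls, hcond⟩
        · right
          refine ⟨List.mem_cons_self, ?_⟩
          intro j hj hlt
          rcases greedy_subset N ls _ hj with (rfl | hjW) | hjls
          · exact absurd hlt (lt_irrefl _)
          · refine hSval _ (greedy_mono N ls _ (Set.mem_insert _ _)) _
              (greedy_mono N ls _ (Set.mem_insert_of_mem _ hjW)) ?_
            rintro rfl; exact absurd hlt (lt_irrefl _)
          · exact absurd hlt (not_lt.mpr (le_of_lt (hx j hjls)))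
        · exact Or.inl hlW
        · exact Or.inr ⟨List.mem_cons_of_mem _ hlls, hcond⟩
      · intro hl
        rcases hl with hlW | ⟨hlls, hcond⟩
        · exact IH.mpr (Or.inl (Set.mem_insert_of_mem _ hlW))
        · rcases List.mem_cons.mp hlls with rfl | hlls'
          · exact IH.mpr (Or.inl (Set.mem_insert _ _))
          · exact IH.mpr (Or.inr ⟨hlls', hcond⟩)
    · have hgl : greedyList N (x :: ls) W = greedyList N ls W := by
        show greedyList N ls _ = _
        rw [if_neg hval]
      rw [hgl]
      have IH := ih W hls hW
        (fun w hw y hy => hWls w hw y (List.mem_cons_of_mem _ hy)) l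
      constructor
      · intro hl
        rcases IH.mp hl with hlW | ⟨hlls, hcond⟩
        · exact Or.inl hlW
        · exact Or.inr ⟨List.mem_cons_of_mem _ hlls, hcond⟩
      · intro hl
        rcases hl with hlW | ⟨hlls, hcond⟩
        · exact IH.mpr (Or.inl hlW)
        · rcases List.mem_cons.mp hlls with rfl | hlls'
          · -- contradiction with ¬ KValid (insert l W)
            exfalso
            unfold KValid at hval
            push_neg at hval
            obtain ⟨u, hu, v, hv, huv, hd⟩ := hval
            rcases hu with rfl | huW <;> rcases hv with rfl | hvW
            · exact huv rfl
            · have hlam : N.lam u < N.lam v := hWls v hvW u (List.mem_cons_self)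
              exact absurd (hcond v (greedy_mono N ls W hvW) hlam) (not_le.mpr hd)
            · have hlam : N.lam v < N.lam u := hWls u huW v (List.mem_cons_self)
              rw [linkDist_comm] at hd
              exact absurd (hcond u (greedy_mono N ls W huW) hlam) (not_le.mpr hd)
            · exact absurd (hW u huW v hvW huv) (not_le.mpr hd)
          · exact IH.mpr (Or.inr ⟨hlls', hcond⟩)

end Stmt13

namespace Stmt13

def Inv {V : Type*} (N : Net V) (LC : Set (V × V)) (s : St V) : Prop :=
  s.O ⊆ N.L ∧ s.H ⊆ N.L ∧ s.M ⊆ N.L ∧ s.C ⊆ N.L ∧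
  N.L ⊆ s.O ∪ s.H ∪ s.M ∪ s.C ∧
  (∀ l ∈ s.O ∪ s.H, ∀ j ∈ s.M, N.K ≤ linkDist N.G l j) ∧
  (∀ l ∈ s.H, ∃ w ∈ s.O, w.1 = l.1 ∧ N.lam l < N.lam w) ∧
  s.M ⊆ LC ∧ s.C ∩ LC = ∅

lemma step_inv_aux {V : Type*} (N : Net V) (LC : Set (V × V))
    (hLCsub : LC ⊆ N.L) (hLCval : KValid N LC)
    (hchar : ∀ l, l ∈ LC ↔ l ∈ N.L ∧ ∀ j ∈ LC, N.lam l < N.lam j → N.K ≤ linkDist N.G l j)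
    (s s' : St V) (a : V → V × V) (hsel : IsSelector N s a)
    (NM C1 NC M2 pool C2 rem RE : Set (V × V))
    (hNM : NM = {l | ∃ n, MarkCond N s a n ∧ l = a n})
    (hC1 : C1 = {l ∈ s.O | MarkCond N s a l.1 ∧ l ≠ a l.1})
    (hNC : NC = {l ∈ s.O | ¬ MarkCond N s a l.1 ∧
        ∃ l' ∈ Rset N s a l.1, N.lam l < N.lam l' ∧ linkDist N.G l l' < N.K})
    (hM2 : M2 = s.M ∪ NM)
    (hpool : pool = s.H ∪ NC)
    (hC2 : C2 = {l ∈ pool | ∃ j ∈ M2, linkDist N.G l j < N.K})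
    (hrem : rem = pool \ C2)
    (hRE : RE = {l ∈ rem | ∀ l' ∈ rem, l'.1 = l.1 → N.lam l' ≤ N.lam l})
    (hO' : s'.O = (s.O \ (NM ∪ C1 ∪ NC)) ∪ RE)
    (hH' : s'.H = rem \ RE)
    (hM' : s'.M = M2)
    (hC' : s'.C = s.C ∪ C1 ∪ C2)
    (hinv : Inv N LC s) : Inv N LC s' := by
  obtain ⟨hOL, hHL, hML, hCL, hcover, hd, he, hb, hc⟩ := hinv
  have hNCO : NC ⊆ s.O := by rw [hNC]; intro x hx; exact hx.1
  have hpoolL : pool ⊆ N.L := by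
    rw [hpool]; intro x hx
    rcases hx with h | h
    exacts [hHL h, hOL (hNCO h)]
  have hpoolOH : pool ⊆ s.O ∪ s.H := by
    rw [hpool]; intro x hx
    rcases hx with h | h
    exacts [Set.mem_union_right _ h, Set.mem_union_left _ (hNCO h)]
  have hrempool : rem ⊆ pool := by rw [hrem]; exact Set.diff_subset
  have hREpool : RE ⊆ pool := by
    rw [hRE]; intro x hx; exact hrempool hx.1
  -- Claim A': no strictly higher-priced non-CLOSED link interferes with a marked link
  have key1 : ∀ n, MarkCond N s a n → ∀ l, l ∈ s.O ∪ s.H ∪ s.M →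
      N.lam (a n) < N.lam l → N.K ≤ linkDist N.G l (a n) := by
    intro n hmc l hl hlt
    by_contra hle
    push_neg at hle
    have hanO : a n ∈ s.O := (hsel n hmc.1).1.1
    have han1 : (a n).1 = n := (hsel n hmc.1).1.2
    have hanL : a n ∈ N.L := hOL hanO
    have main : ∀ w ∈ s.O, w.1 = l.1 → N.lam l ≤ N.lam w → l ∈ N.L → False := by
      intro w hwO hw1 hwlam hlL
      have hne' : (openAt s l.1).Nonempty := ⟨w, hwO, hw1⟩
      have hmax : N.lam w ≤ N.lam (a l.1) := (hsel l.1 hne').2 w ⟨hwO, hw1⟩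
      by_cases hnn : l.1 = n
      · rw [hnn] at hmax
        linarith
      · have hdist : N.G.dist n l.1 ≤ N.K + 1 := by
          have h := close_nodes N.conn (N.adj _ hanL) (N.adj _ hlL)
            (by rw [linkDist_comm]; exact hle)
          rwa [han1] at h
        have hR : a l.1 ∈ Rset N s a n := ⟨l.1, hnn, hdist, hne', rfl⟩
        have := hmc.2 _ hR
        linarith
    rcases hl with (hlO | hlH) | hlM
    · exact main l hlO rfl le_rfl (hOL hlO)
    · obtain ⟨w, hwO, hw1, hwlam⟩ := he l hlH
      exact main w hwO hw1 hwlam.le (hHL hlH)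
    · have h := hd (a n) (Set.mem_union_left _ hanO) l hlM
      rw [linkDist_comm] at h
      exact absurd h (not_le.mpr hle)
  -- Claim: a freshly marked link beats every interfering link of the pool
  have key2 : ∀ n, MarkCond N s a n → ∀ l ∈ pool, linkDist N.G l (a n) < N.K →
      N.lam l < N.lam (a n) := by
    intro n hmc l hlpool hdlt
    have hanO : a n ∈ s.O := (hsel n hmc.1).1.1
    have han1 : (a n).1 = n := (hsel n hmc.1).1.2
    have hlL : l ∈ N.L := hpoolL hlpool
    rcases lt_trichotomy (N.lam l) (N.lam (a n)) with h | h | h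
    · exact h
    · exfalso
      have hleq : l = a n := by
        by_contra hne
        exact N.distinct l hlL (a n) (hOL hanO) hne h
      rw [hpool] at hlpool
      rcases hlpool with hlH | hlNC
      · obtain ⟨w, hwO, hw1, hwlam⟩ := he l hlH
        have hwmem : w ∈ openAt s n := ⟨hwO, by rw [hw1, hleq, han1]⟩
        have hmax : N.lam w ≤ N.lam (a n) := (hsel n hmc.1).2 w hwmem
        linarith
      · rw [hNC] at hlNC
        have h1 : l.1 = n := by rw [hleq, han1]
        exact hlNC.2.1 (by rw [h1]; exact hmc)
    · exfalso
      have := key1 n hmc l (Set.mem_union_left _ (hpoolOH hlpool)) h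
      omega
  -- M2 is contained in the centralized schedule
  have hM2LC : M2 ⊆ LC := by
    rw [hM2]
    intro j hj
    rcases hj with hjM | hjNM
    · exact hb hjM
    · rw [hNM] at hjNM
      obtain ⟨n, hmc, rfl⟩ := hjNM
      have hanO : a n ∈ s.O := (hsel n hmc.1).1.1
      refine (hchar (a n)).mpr ⟨hOL hanO, ?_⟩
      intro l hlLC hlt
      by_contra hle
      push_neg at hle
      rw [linkDist_comm] at hle
      rcases hcover (hLCsub hlLC) with hl | hlC
      · exact absurd (key1 n hmc l hl hlt) (not_le.mpr hle)
      · have : l ∈ s.C ∩ LC := ⟨hlC, hlLC⟩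
        rw [hc] at this
        exact this
  refine ⟨?_, ?_, ?_, ?_, ?_, ?_, ?_, ?_, ?_⟩
  · -- O' ⊆ L
    rw [hO']; intro x hx
    rcases hx with hx | hx
    exacts [hOL hx.1, hpoolL (hREpool hx)]
  · -- H' ⊆ L
    rw [hH']; intro x hx
    exact hpoolL (hrempool hx.1)
  · -- M' ⊆ L
    rw [hM', hM2]; intro x hx
    rcases hx with hx | hx
    · exact hML hx
    · rw [hNM] at hx
      obtain ⟨n, hmc, rfl⟩ := hx
      exact hOL (hsel n hmc.1).1.1
  · -- C' ⊆ L
    rw [hC']; intro x hx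
    rcases hx with (hx | hx) | hx
    · exact hCL hx
    · rw [hC1] at hx; exact hOL hx.1
    · rw [hC2] at hx; exact hpoolL hx.1
  · -- cover
    rw [hO', hH', hM', hC']
    intro l hlL
    have hpool_case : l ∈ pool →
        l ∈ (s.O \ (NM ∪ C1 ∪ NC) ∪ RE ∪ (rem \ RE) ∪ M2) ∪ (s.C ∪ C1 ∪ C2) := by
      intro hlp
      by_cases h2 : l ∈ C2
      · exact Set.mem_union_right _ (Set.mem_union_right _ h2)
      · have hlrem : l ∈ rem := by rw [hrem]; exact ⟨hlp, h2⟩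
        by_cases h3 : l ∈ RE
        · exact Set.mem_union_left _ (Set.mem_union_left _ (Set.mem_union_left _
            (Set.mem_union_right _ h3)))
        · exact Set.mem_union_left _ (Set.mem_union_left _ (Set.mem_union_right _ ⟨hlrem, h3⟩))
    rcases hcover hlL with ((hlO | hlH) | hlM) | hlC
    · by_cases h1 : l ∈ NM
      · exact Set.mem_union_left _ (Set.mem_union_right _
          (show l ∈ M2 by rw [hM2]; exact Set.mem_union_right _ h1))
      · by_cases h1b : l ∈ C1
        · exact Set.mem_union_right _ (Set.mem_union_left _ (Set.mem_union_right _ h1b))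
        · by_cases h1c : l ∈ NC
          · exact hpool_case (by rw [hpool]; exact Set.mem_union_right _ h1c)
          · refine Set.mem_union_left _ (Set.mem_union_left _ (Set.mem_union_left _
              (Set.mem_union_left _ ?_)))
            refine ⟨hlO, ?_⟩
            intro hx
            rcases hx with (h | h) | h
            exacts [h1 h, h1b h, h1c h]
    · exact hpool_case (by rw [hpool]; exact Set.mem_union_left _ hlH)
    · exact Set.mem_union_left _ (Set.mem_union_right _
        (show l ∈ M2 by rw [hM2]; exact Set.mem_union_left _ hlM))
    · exact Set.mem_union_right _ (Set.mem_union_left _ (Set.mem_union_left _ hlC))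
  · -- no OPEN/CHECK link interferes with a MARKED link
    rw [hO', hH', hM']
    intro l hl j hj
    have hrem_ok : l ∈ rem → N.K ≤ linkDist N.G l j := by
      intro hlrem
      rw [hrem] at hlrem
      by_contra hle
      push_neg at hle
      exact hlrem.2 (by rw [hC2]; exact ⟨hlrem.1, j, hj, hle⟩)
    rcases hl with (hl | hlRE) | hl
    · -- l ∈ s.O \ (NM ∪ C1 ∪ NC)
      obtain ⟨hlO, hlnot⟩ := hl
      rw [hM2] at hj
      rcases hj with hjM | hjNM
      · exact hd l (Set.mem_union_left _ hlO) j hjM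
      · rw [hNM] at hjNM
        obtain ⟨n, hmc, rfl⟩ := hjNM
        by_contra hle
        push_neg at hle
        have hlL : l ∈ N.L := hOL hlO
        have hanO : a n ∈ s.O := (hsel n hmc.1).1.1
        have han1 : (a n).1 = n := (hsel n hmc.1).1.2
        rcases lt_trichotomy (N.lam l) (N.lam (a n)) with hlt | heq | hgt
        · by_cases hmc1 : MarkCond N s a l.1
          · by_cases hla : l = a l.1
            · exact hlnot (Set.mem_union_left _ (Set.mem_union_left _
                (by rw [hNM]; exact ⟨l.1, hmc1, hla⟩)))
            · exact hlnot (Set.mem_union_left _ (Set.mem_union_right _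
                (by rw [hC1]; exact ⟨hlO, hmc1, hla⟩)))
          · have hn1 : l.1 ≠ n := fun h => hmc1 (by rw [h]; exact hmc)
            have hdist : N.G.dist l.1 n ≤ N.K + 1 := by
              have h := close_nodes N.conn (N.adj _ hlL) (N.adj _ (hOL hanO)) hle
              rwa [han1] at h
            refine hlnot (Set.mem_union_right _ ?_)
            rw [hNC]
            exact ⟨hlO, hmc1, a n, ⟨n, fun h => hn1 h.symm, hdist, hmc.1, rfl⟩, hlt, hle⟩
        · have hleq : l = a n := by
            by_contra hne
            exact N.distinct l hlL (a n) (hOL hanO) hne heq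
          exact hlnot (Set.mem_union_left _ (Set.mem_union_left _
            (by rw [hNM]; exact ⟨n, hmc, hleq⟩)))
        · exact absurd (key1 n hmc l (Set.mem_union_left _ (Set.mem_union_left _ hlO)) hgt)
            (not_le.mpr hle)
    · exact hrem_ok (by rw [hRE] at hlRE; exact hlRE.1)
    · exact hrem_ok hl.1
  · -- every CHECK link has a higher-priced OPEN link at its node
    rw [hH', hO']
    intro l hl
    obtain ⟨hlrem, hlnRE⟩ := hl
    have hSsub : {x ∈ rem | x.1 = l.1} ⊆ N.L := by
      intro x hx
      exact hpoolL (hrempool hx.1)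
    have hfin : {x ∈ rem | x.1 = l.1}.Finite := N.Lfin.subset hSsub
    obtain ⟨w, hwS, hwmax⟩ :=
      Set.Finite.exists_maximalFor N.lam _ hfin ⟨l, hlrem, rfl⟩
    have hwge : ∀ x ∈ {x ∈ rem | x.1 = l.1}, N.lam x ≤ N.lam w := by
      intro x hx
      by_contra hgt
      push_neg at hgt
      exact absurd (hwmax hx hgt.le) (not_le.mpr hgt)
    have hwRE : w ∈ RE := by
      rw [hRE]
      exact ⟨hwS.1, fun x hx hx1 => hwge x ⟨hx, by rw [hx1, hwS.2]⟩⟩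
    refine ⟨w, Set.mem_union_right _ hwRE, hwS.2, ?_⟩
    have hlle : N.lam l ≤ N.lam w := hwge l ⟨hlrem, rfl⟩
    have hlne : l ≠ w := fun h => hlnRE (h ▸ hwRE)
    exact lt_of_le_of_ne hlle
      (N.distinct l (hpoolL (hrempool hlrem)) w (hSsub hwS) hlne)
  · -- M' ⊆ LC
    rw [hM']; exact hM2LC
  · -- C' ∩ LC = ∅
    rw [hC']
    ext l
    simp only [Set.mem_inter_iff, Set.mem_empty_iff_false, iff_false, not_and]
    rintro ((hl | hl) | hl) hlLC
    · have h : l ∈ s.C ∩ LC := ⟨hl, hlLC⟩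
      rw [hc] at h
      exact h
    · rw [hC1] at hl
      obtain ⟨hlO, hmc, hlne⟩ := hl
      have hne0 : (openAt s l.1).Nonempty := hmc.1
      have haO : a l.1 ∈ s.O := (hsel l.1 hne0).1.1
      have ha1 : (a l.1).1 = l.1 := (hsel l.1 hne0).1.2
      have hjLC : a l.1 ∈ LC := hM2LC (by
        rw [hM2]
        exact Set.mem_union_right _ (by rw [hNM]; exact ⟨l.1, hmc, rfl⟩))
      have h0 : linkDist N.G l (a l.1) = 0 := by
        have h := linkDist_le_fst N.G l (a l.1)
        rw [ha1, SimpleGraph.dist_self] at h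
        omega
      have hK := N.hK
      have := hLCval l hlLC _ hjLC hlne
      omega
    · rw [hC2] at hl
      obtain ⟨hlpool, j, hjM2, hdlt⟩ := hl
      rw [hM2] at hjM2
      rcases hjM2 with hjM | hjNM
      · have := hd l (hpoolOH hlpool) j hjM
        omega
      · rw [hNM] at hjNM
        obtain ⟨n, hmc, rfl⟩ := hjNM
        have hlam := key2 n hmc l hlpool hdlt
        have hjLC : a n ∈ LC := hM2LC (by
          rw [hM2]
          exact Set.mem_union_right _ (by rw [hNM]; exact ⟨n, hmc, rfl⟩))
        have hlne : l ≠ a n := by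
          rintro rfl
          exact lt_irrefl _ hlam
        have := hLCval l hlLC _ hjLC hlne
        omega

lemma step_inv {V : Type*} (N : Net V) (LC : Set (V × V))
    (hLCsub : LC ⊆ N.L) (hLCval : KValid N LC)
    (hchar : ∀ l, l ∈ LC ↔ l ∈ N.L ∧ ∀ j ∈ LC, N.lam l < N.lam j → N.K ≤ linkDist N.G l j)
    (s s' : St V) (hstep : Step N s s') (hinv : Inv N LC s) : Inv N LC s' := by
  obtain ⟨a, hsel, hO', hH', hM', hC'⟩ := hstep
  exact step_inv_aux N LC hLCsub hLCval hchar s s' a hsel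
    _ _ _ _ _ _ _ _ rfl rfl rfl rfl rfl rfl rfl rfl hO' hH' hM' hC' hinv

end Stmt13
/-- if the distributed greedy algorithm terminates after round `t`, then
it schedules exactly the links of the centralized greedy schedule: `M (t+1) = L_C`. -/
theorem stmt13_distributed_equals_centralized {V : Type*} [Fintype V] (N : Net V)
    (O H M C : ℕ → Set (V × V)) (htraj : IsTrajectory N O H M C)
    (lst : List (V × V)) (hmem : ∀ l, l ∈ lst ↔ l ∈ N.L)
    (hsort : lst.Pairwise (fun a b => N.lam b < N.lam a))
    (t : ℕ) (ht : 1 ≤ t) (hterm : O (t + 1) ∪ H (t + 1) = ∅) :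
    M (t + 1) = greedyList N lst ∅ := by
  have hvalid0 : KValid N (∅ : Set (V × V)) := fun l hl => absurd hl (Set.notMem_empty l)
  have hLCval : KValid N (greedyList N lst ∅) := Stmt13.greedy_valid N lst ∅ hvalid0
  have hLCsub : greedyList N lst ∅ ⊆ N.L := by
    intro l hl
    rcases Stmt13.greedy_subset N lst ∅ hl with h | h
    · exact absurd h (Set.notMem_empty l)
    · exact (hmem l).mp h
  have hchar : ∀ l, l ∈ greedyList N lst ∅ ↔ l ∈ N.L ∧
      ∀ j ∈ greedyList N lst ∅, N.lam l < N.lam j → N.K ≤ linkDist N.G l j := by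
    intro l
    have h := Stmt13.greedy_char N lst ∅ hsort hvalid0
      (fun w hw => absurd hw (Set.notMem_empty w)) l
    rw [h]
    simp only [Set.mem_empty_iff_false, false_or]
    constructor
    · rintro ⟨h1, h2⟩; exact ⟨(hmem l).mp h1, h2⟩
    · rintro ⟨h1, h2⟩; exact ⟨(hmem l).mpr h1, h2⟩
  obtain ⟨hO1, hH1, hM1, hC1, hstep⟩ := htraj
  have hInv : ∀ m, 1 ≤ m → Stmt13.Inv N (greedyList N lst ∅) ⟨O m, H m, M m, C m⟩ := by
    intro m hm
    induction m with
    | zero => omega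
    | succ k ih =>
      rcases Nat.lt_or_ge 1 (k + 1) with h1 | h1
      · have hk : 1 ≤ k := by omega
        exact Stmt13.step_inv N _ hLCsub hLCval hchar _ _ (hstep k hk) (ih hk)
      · have hk : k = 0 := by omega
        subst hk
        refine ⟨by rw [hO1], by rw [hH1]; exact Set.empty_subset _,
          by rw [hM1]; exact Set.empty_subset _, by rw [hC1]; exact Set.empty_subset _,
          ?_, ?_, ?_, by rw [hM1]; exact Set.empty_subset _, by rw [hC1]; exact Set.empty_inter _⟩
        · intro l hl
          exact Set.mem_union_left _ (Set.mem_union_left _ (Set.mem_union_left _ (by rw [hO1]; exact hl)))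
        · intro l _ j hj
          rw [show (St.M ⟨O 1, H 1, M 1, C 1⟩) = M 1 from rfl, hM1] at hj
          exact absurd hj (Set.notMem_empty j)
        · intro l hl
          rw [show (St.H ⟨O 1, H 1, M 1, C 1⟩) = H 1 from rfl, hH1] at hl
          exact absurd hl (Set.notMem_empty l)
  obtain ⟨_, _, _, _, hcov, _, _, hbM, hcC⟩ := hInv (t + 1) (by omega)
  apply Set.Subset.antisymm hbM
  intro l hl
  rcases hcov (hLCsub hl) with ((h | h) | h) | h
  · have : l ∈ O (t + 1) ∪ H (t + 1) := Set.mem_union_left _ h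
    rw [hterm] at this
    exact absurd this (Set.notMem_empty l)
  · have : l ∈ O (t + 1) ∪ H (t + 1) := Set.mem_union_right _ h
    rw [hterm] at this
    exact absurd this (Set.notMem_empty l)
  · exact h
  · have : l ∈ C (t + 1) ∩ greedyList N lst ∅ := ⟨h, hl⟩
    rw [hcC] at this
    exact absurd this (Set.notMem_empty l)
end

section
/- If L ≠ ∅ and l_1 is the globally highest-priced link of L, then l_1 ∈ L_C and l_1 ∈ M_2: the globally maximum-priced link is chosen by the centralized greedy algorithm and is MARKED by the distributed greedy algorithm after the first round. -/
open Classical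

lemma greedyList_mono {V : Type*} (N : Net V) :
    ∀ (ls : List (V × V)) (W : Set (V × V)), W ⊆ greedyList N ls W := by
  intro ls
  induction ls with
  | nil => intro W; simp [greedyList]
  | cons l ls ih =>
    intro W
    simp only [greedyList]
    split
    · exact fun x hx => ih _ (Set.mem_insert_of_mem _ hx)
    · exact ih W

/-- if `L ≠ ∅` and `l₁` is the globally highest-priced link of `L`, then
`l₁` is chosen by the centralized greedy algorithm and is MARKED by the distributed
greedy algorithm after the first round: `l₁ ∈ L_C` and `l₁ ∈ M 2`. -/
theorem stmt15_global_max_chosen_and_marked {V : Type*} [Fintype V] (N : Net V)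
    (O H M C : ℕ → Set (V × V)) (htraj : IsTrajectory N O H M C)
    (lst : List (V × V)) (hmem : ∀ l, l ∈ lst ↔ l ∈ N.L)
    (hsort : lst.Pairwise (fun a b => N.lam b < N.lam a))
    (hL : N.L.Nonempty) (l₁ : V × V) (hl₁ : l₁ ∈ N.L)
    (hmax : ∀ l ∈ N.L, N.lam l ≤ N.lam l₁) :
    l₁ ∈ greedyList N lst ∅ ∧ l₁ ∈ M 2 := by
  obtain ⟨hO1, hH1, hM1, hC1, hstep⟩ := htraj
  constructor
  · -- centralized part
    have hl1lst : l₁ ∈ lst := (hmem l₁).2 hl₁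
    obtain ⟨x, xs, hx⟩ : ∃ x xs, lst = x :: xs := by
      cases lst with
      | nil => simp at hl1lst
      | cons x xs => exact ⟨x, xs, rfl⟩
    subst hx
    have hxL : x ∈ N.L := (hmem x).1 List.mem_cons_self
    have hxeq : x = l₁ := by
      rcases List.mem_cons.1 hl1lst with h | h
      · exact h.symm
      · exfalso
        have := (List.pairwise_cons.1 hsort).1 l₁ h
        exact absurd (hmax x hxL) (not_le.2 this)
    subst hxeq
    have hval : KValid N (insert x (∅ : Set (V × V))) := by
      intro l hl l' hl' hne
      simp only [Set.mem_insert_iff, Set.mem_empty_iff_false, or_false] at hl hl'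
      exact absurd (hl.trans hl'.symm) hne
    simp only [greedyList, if_pos hval]
    exact greedyList_mono N xs _ (Set.mem_insert _ _)
  · -- distributed part
    obtain ⟨a, hsel, hrest⟩ := hstep 1 le_rfl
    simp only at hrest
    obtain ⟨_, _, hM2, _⟩ := hrest
    set s : St V := ⟨O 1, H 1, M 1, C 1⟩ with hs
    have hne : (openAt s l₁.1).Nonempty := ⟨l₁, by simp [openAt, hs, hO1, hl₁]⟩
    obtain ⟨hamem, hamax⟩ := hsel l₁.1 hne
    have haL : a l₁.1 ∈ N.L := by
      have := hamem.1; simpa [hs, hO1] using this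
    have haeq : a l₁.1 = l₁ := by
      by_contra hneq
      have h1 : N.lam l₁ ≤ N.lam (a l₁.1) := hamax l₁ (by simp [openAt, hs, hO1, hl₁])
      have h2 : N.lam (a l₁.1) ≤ N.lam l₁ := hmax _ haL
      exact N.distinct _ haL _ hl₁ hneq (le_antisymm h2 h1)
    have hmark : MarkCond N s a l₁.1 := by
      refine ⟨hne, ?_⟩
      rintro l' ⟨n', hn', _, hne', rfl⟩
      obtain ⟨ha'mem, _⟩ := hsel n' hne'
      have ha'L : a n' ∈ N.L := by have := ha'mem.1; simpa [hs, hO1] using this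
      have hne2 : a n' ≠ a l₁.1 := by
        intro h
        apply hn'
        rw [← ha'mem.2, h, haeq]
      rw [haeq]
      exact lt_of_le_of_ne (hmax _ ha'L)
        (fun h => N.distinct _ ha'L _ hl₁ (by rw [haeq] at hne2; exact hne2) h)
    rw [hM2]
    right
    exact ⟨l₁.1, hmark, haeq.symm⟩
end
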